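/- Let q = p^m be a power of a prime p and a ∈ F_{q²} with a^{q+1} = −1. Let L be an n×n unitary matrix over F_{q²} with rows L₁,…,Lₙ, and suppose α, β, γ, δ, λ, θ ∈ F_{q²} satisfy δ^{q+1} + (n−2) + γ^{q+1} = 0, θ^{q+1} + n·β^{q+1} + α^{q+1} + n·λ^{q+1} = 0, and θδ^q + (n−1)β + αγ^q + λa^q = 0 (integers read in F_{q²}). Then the code generated by the bordered matrix G (with first row (θ, β,…,β, α, λ(L₁+⋯+Lₙ)) and (i+1)-st row (δ, (Jₙ−Iₙ)ᵢ, γ, aLᵢ) for 1 ≤ i ≤ n) is a Hermitian self-orthogonal code of length 2n+2 and dimension at least n. Moreover, if δ = 0 and θ ≠ 0, then this code is Hermitian self-dual of length 2n+2 and dimension n+1. -/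

import Mathlib

open Matrix BigOperators Finset

/-- The Hermitian inner product `x * y = ∑ i, x i * (y i)^q` over `F_{q²}`. -/
def hermInner (q : ℕ) {F : Type} [CommRing F] {ι : Type} [Fintype ι]
    (x y : ι → F) : F :=
  ∑ i, x i * y i ^ q

/-- The Hermitian dual of a set of vectors. -/
def hermDual (q : ℕ) {F : Type} [CommRing F] {ι : Type} [Fintype ι]
    (C : Set (ι → F)) : Set (ι → F) :=
  {y | ∀ x ∈ C, hermInner q x y = 0}

/-- The code generated by a matrix: the span of its rows. -/
def rowSpan {F : Type} [Field F] {k : ℕ} {ι : Type} (G : Matrix (Fin k) ι F) :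
    Submodule F (ι → F) :=
  Submodule.span F (Set.range fun i => G i)

section AuxLemmas

variable {q : ℕ} {F : Type} [Field F] {ι : Type} [Fintype ι]

lemma hermInner_add_left (x x' y : ι → F) :
    hermInner q (x + x') y = hermInner q x y + hermInner q x' y := by
  simp [hermInner, add_mul, Finset.sum_add_distrib]

lemma hermInner_smul_left (c : F) (x y : ι → F) :
    hermInner q (c • x) y = c * hermInner q x y := by
  simp [hermInner, Finset.mul_sum, mul_assoc]

lemma hermInner_zero_left (y : ι → F) : hermInner q (0 : ι → F) y = 0 := by
  simp [hermInner]

/-- If the Hermitian inner products with the rows vanish, so do those with any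
element of the row span. -/
lemma hermInner_span_left {k : ℕ} (G : Matrix (Fin k) ι F) (y : ι → F)
    (h : ∀ i, hermInner q (G i) y = 0) :
    ∀ x ∈ rowSpan G, hermInner q x y = 0 := by
  intro x hx
  refine Submodule.span_induction (p := fun x _ => hermInner q x y = 0) ?_ ?_ ?_ ?_ hx
  · rintro _ ⟨i, rfl⟩; exact h i
  · exact hermInner_zero_left y
  · intro u v _ _ hu hv; rw [hermInner_add_left, hu, hv, add_zero]
  · intro c u _ hu; rw [hermInner_smul_left, hu, mul_zero]

end AuxLemmas

/-- Lemma 3 of the paper. For `a^{q+1} = -1`, `L` an `n×n` unitary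
matrix with rows `L₁,…,Lₙ`, and `α, β, γ, δ, λ, θ` satisfying the three equations,
the bordered matrix `G` generates a Hermitian self-orthogonal code of length
`2n+2` and dimension at least `n`; if moreover `δ = 0` and `θ ≠ 0`, the code is
Hermitian self-dual of dimension `n+1`. -/
theorem stmt7 (p m q n : ℕ) (hp : p.Prime) (hm : 0 < m) (hq : q = p ^ m)
    (F : Type) [Field F] [Fintype F] (hF : Fintype.card F = q ^ 2)
    (a : F) (ha : a ^ (q + 1) = -1)
    (L : Matrix (Fin n) (Fin n) F) (hL : L * (L.map (· ^ q))ᵀ = 1)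
    (α β γ δ lam θ : F)
    (h1 : δ ^ (q + 1) + ((n : F) - 2) + γ ^ (q + 1) = 0)
    (h2 : θ ^ (q + 1) + (n : F) * β ^ (q + 1) + α ^ (q + 1) + (n : F) * lam ^ (q + 1) = 0)
    (h3 : θ * δ ^ q + ((n : F) - 1) * β + α * γ ^ q + lam * a ^ q = 0)
    (G : Matrix (Fin (n + 1)) ((Unit ⊕ Fin n) ⊕ (Unit ⊕ Fin n)) F)
    (hG1 : G 0 (Sum.inl (Sum.inl ())) = θ)
    (hG2 : ∀ j, G 0 (Sum.inl (Sum.inr j)) = β)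
    (hG3 : G 0 (Sum.inr (Sum.inl ())) = α)
    (hG4 : ∀ j, G 0 (Sum.inr (Sum.inr j)) = lam * ∑ k, L k j)
    (hG5 : ∀ i : Fin n, G i.succ (Sum.inl (Sum.inl ())) = δ)
    (hG6 : ∀ i j : Fin n, G i.succ (Sum.inl (Sum.inr j)) = if j = i then 0 else 1)
    (hG7 : ∀ i : Fin n, G i.succ (Sum.inr (Sum.inl ())) = γ)
    (hG8 : ∀ i j : Fin n, G i.succ (Sum.inr (Sum.inr j)) = a * L i j) :
    ((rowSpan G : Set ((Unit ⊕ Fin n) ⊕ (Unit ⊕ Fin n) → F)) ⊆ hermDual q (rowSpan G) ∧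
      n ≤ Module.finrank F (rowSpan G)) ∧
    (δ = 0 → θ ≠ 0 →
      (rowSpan G : Set ((Unit ⊕ Fin n) ⊕ (Unit ⊕ Fin n) → F)) = hermDual q (rowSpan G) ∧
      Module.finrank F (rowSpan G) = n + 1) := by
  classical
  -- basic facts about q and the characteristic
  have hq1 : 1 ≤ q := by rw [hq]; exact Nat.one_le_pow _ _ hp.pos
  have hq0 : q ≠ 0 := by omega
  have hcharp : CharP F p := by
    obtain ⟨k, hr, hcard⟩ := FiniteField.card F (ringChar F)
    have hpow : (ringChar F) ^ (k : ℕ) = p ^ (m * 2) := by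
      rw [← hcard, hF, hq, ← pow_mul]
    have hdvd : ringChar F ∣ p ^ (m * 2) := by
      rw [← hpow]
      exact dvd_pow_self _ k.pos.ne'
    have : ringChar F = p :=
      (Nat.prime_dvd_prime_iff_eq hr hp).mp (hr.dvd_of_dvd_pow hdvd)
    exact ringChar.of_eq this
  haveI := hcharp
  haveI : ExpChar F p := ExpChar.prime hp
  set φ : F →+* F := iterateFrobenius F p m with hφdef
  have hφ : ∀ x : F, φ x = x ^ q := by
    intro x; rw [hφdef, iterateFrobenius_def, hq]
  have hfrobadd : ∀ x y : F, (x + y) ^ q = x ^ q + y ^ q := by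
    intro x y; simpa [hφ] using map_add φ x y
  have hfrobsum : ∀ (f : Fin n → F), (∑ i, f i) ^ q = ∑ i, (f i) ^ q := by
    intro f; simpa [hφ] using map_sum φ f Finset.univ
  have hqq : ∀ x : F, (x ^ q) ^ q = x := by
    intro x
    rw [← pow_mul, ← pow_two, ← hF]
    exact FiniteField.pow_card x
  have ha0 : a ≠ 0 := by
    intro h
    rw [h, zero_pow (by omega : q + 1 ≠ 0)] at ha
    exact one_ne_zero (neg_eq_zero.mp ha.symm)
  -- unitarity of L, rowwise
  have hLL : ∀ i j, (∑ k, L i k * L j k ^ q) = if i = j then (1 : F) else 0 := by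
    intro i j
    have := congrFun (congrFun hL i) j
    simpa [Matrix.mul_apply, Matrix.one_apply, Matrix.transpose_apply, Matrix.map_apply]
      using this
  -- splitting the Hermitian inner product over the index type
  have hsplit : ∀ x y : (Unit ⊕ Fin n) ⊕ (Unit ⊕ Fin n) → F, hermInner q x y =
      x (Sum.inl (Sum.inl ())) * y (Sum.inl (Sum.inl ())) ^ q
      + ∑ j, x (Sum.inl (Sum.inr j)) * y (Sum.inl (Sum.inr j)) ^ q
      + (x (Sum.inr (Sum.inl ())) * y (Sum.inr (Sum.inl ())) ^ q
      + ∑ j, x (Sum.inr (Sum.inr j)) * y (Sum.inr (Sum.inr j)) ^ q) := by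
    intro x y
    simp [hermInner, Fintype.sum_sum_type]
  -- conjugate symmetry
  have hconj : ∀ x y : (Unit ⊕ Fin n) ⊕ (Unit ⊕ Fin n) → F,
      hermInner q y x = (hermInner q x y) ^ q := by
    intro x y
    have : (hermInner q x y) ^ q = ∑ i, (x i * y i ^ q) ^ q := by
      simpa [hφ, hermInner] using map_sum φ (fun i => x i * y i ^ q) Finset.univ
    rw [this, hermInner]
    refine Finset.sum_congr rfl fun i _ => ?_
    rw [mul_pow, hqq]
    ring
  -- the three key inner-product computations
  have hkey00 : hermInner q (G 0) (G 0) = 0 := by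
    rw [hsplit, hG1, hG3]
    simp only [hG2, hG4]
    have e1 : ∑ _j : Fin n, β * β ^ q = (n : F) * β ^ (q + 1) := by
      rw [Finset.sum_const, card_univ, Fintype.card_fin, nsmul_eq_mul, pow_succ]
      ring
    have e2 : ∑ j : Fin n, (lam * ∑ k, L k j) * (lam * ∑ k, L k j) ^ q
        = (n : F) * lam ^ (q + 1) := by
      have step : ∀ j : Fin n, (lam * ∑ k, L k j) * (lam * ∑ k, L k j) ^ q
          = lam ^ (q + 1) * ∑ k, ∑ k', L k j * L k' j ^ q := by
        intro j
        calc (lam * ∑ k, L k j) * (lam * ∑ k, L k j) ^ q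
            = lam ^ (q + 1) * ((∑ k, L k j) * ∑ k', (L k' j) ^ q) := by
              rw [mul_pow, hfrobsum (fun k => L k j), pow_succ]; ring
          _ = lam ^ (q + 1) * ∑ k, ∑ k', L k j * L k' j ^ q := by
              rw [Finset.sum_mul_sum]
      rw [Finset.sum_congr rfl fun j _ => step j, ← Finset.mul_sum]
      have hval : ∑ j : Fin n, ∑ k, ∑ k', L k j * L k' j ^ q = (n : F) := by
        rw [Finset.sum_comm]
        have swap2 : ∀ k : Fin n, ∑ j : Fin n, ∑ k', L k j * L k' j ^ q
            = ∑ k', ∑ j : Fin n, L k j * L k' j ^ q := fun _ => Finset.sum_comm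
        rw [Finset.sum_congr rfl fun k _ => swap2 k]
        rw [Finset.sum_congr rfl fun k _ =>
          Finset.sum_congr rfl fun k' _ => hLL k k']
        simp [Finset.sum_ite_eq]
      rw [hval]
      ring
    rw [e1, e2]
    linear_combination h2
  have hkey01 : ∀ i : Fin n, hermInner q (G 0) (G i.succ) = 0 := by
    intro i
    rw [hsplit, hG1, hG3, hG5, hG7]
    simp only [hG2, hG4, hG6, hG8]
    have e1 : ∑ j : Fin n, β * (if j = i then (0:F) else 1) ^ q = (n : F) * β - β := by
      have step : ∀ j : Fin n, β * (if j = i then (0:F) else 1) ^ q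
          = β - (if j = i then β else 0) := by
        intro j; split_ifs <;> simp [zero_pow hq0]
      rw [Finset.sum_congr rfl fun j _ => step j, Finset.sum_sub_distrib,
        Finset.sum_const, card_univ, Fintype.card_fin, nsmul_eq_mul,
        Finset.sum_ite_eq' Finset.univ i fun _ => β]
      simp
    have e2 : ∑ j : Fin n, (lam * ∑ k, L k j) * (a * L i j) ^ q = lam * a ^ q := by
      have step : ∀ j : Fin n, (lam * ∑ k, L k j) * (a * L i j) ^ q
          = lam * a ^ q * ∑ k, L k j * L i j ^ q := by
        intro j
        calc (lam * ∑ k, L k j) * (a * L i j) ^ q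
            = lam * a ^ q * ((∑ k, L k j) * L i j ^ q) := by rw [mul_pow]; ring
          _ = lam * a ^ q * ∑ k, L k j * L i j ^ q := by rw [Finset.sum_mul]
      rw [Finset.sum_congr rfl fun j _ => step j, ← Finset.mul_sum]
      have hval : ∑ j : Fin n, ∑ k, L k j * L i j ^ q = 1 := by
        rw [Finset.sum_comm]
        rw [Finset.sum_congr rfl fun k _ => hLL k i]
        simp [Finset.sum_ite_eq']
      rw [hval, mul_one]
    rw [e1, e2]
    linear_combination h3
  have hkey11 : ∀ i j : Fin n, hermInner q (G i.succ) (G j.succ) = 0 := by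
    intro i j
    rw [hsplit, hG5, hG5, hG7, hG7]
    simp only [hG6, hG8]
    have e1 : ∑ k : Fin n, (if k = i then (0:F) else 1) * (if k = j then (0:F) else 1) ^ q
        = (n : F) - 1 - 1 + (if i = j then 1 else 0) := by
      have step : ∀ k : Fin n, (if k = i then (0:F) else 1) * (if k = j then (0:F) else 1) ^ q
          = 1 - (if k = i then (1:F) else 0) - (if k = j then 1 else 0)
            + (if k = i then (1:F) else 0) * (if k = j then 1 else 0) := by
        intro k; split_ifs <;> simp [zero_pow hq0]
      rw [Finset.sum_congr rfl fun k _ => step k]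
      have eprod : ∀ k : Fin n, (if k = i then (1:F) else 0) * (if k = j then 1 else 0)
          = if k = i then (if i = j then (1:F) else 0) else 0 := by
        intro k
        by_cases h : k = i
        · subst h; simp
        · simp [h]
      rw [Finset.sum_add_distrib, Finset.sum_sub_distrib, Finset.sum_sub_distrib,
        Finset.sum_congr rfl fun k _ => eprod k,
        Finset.sum_ite_eq' Finset.univ i fun _ => (1:F),
        Finset.sum_ite_eq' Finset.univ j fun _ => (1:F),
        Finset.sum_ite_eq' Finset.univ i fun _ => (if i = j then (1:F) else 0)]
      simp
    have e2 : ∑ k : Fin n, (a * L i k) * (a * L j k) ^ q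
        = a ^ (q + 1) * (if i = j then (1:F) else 0) := by
      have step : ∀ k : Fin n, (a * L i k) * (a * L j k) ^ q
          = a ^ (q + 1) * (L i k * L j k ^ q) := by
        intro k; rw [mul_pow, pow_succ]; ring
      rw [Finset.sum_congr rfl fun k _ => step k, ← Finset.mul_sum, hLL i j]
    rw [e1, e2, ha]
    by_cases hij : i = j <;> simp only [hij, if_true, if_false] <;> linear_combination h1
  have hkey : ∀ i j : Fin (n+1), hermInner q (G i) (G j) = 0 := by
    intro i j
    induction i using Fin.cases with
    | zero =>
      induction j using Fin.cases with
      | zero => exact hkey00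
      | succ j => exact hkey01 j
    | succ i =>
      induction j using Fin.cases with
      | zero =>
        rw [hconj, hkey01 i, zero_pow hq0]
      | succ j => exact hkey11 i j
  -- right linearity of the Hermitian product
  have hright_add : ∀ x y z : (Unit ⊕ Fin n) ⊕ (Unit ⊕ Fin n) → F,
      hermInner q x (y + z) = hermInner q x y + hermInner q x z := by
    intro x y z
    simp only [hermInner, Pi.add_apply]
    rw [← Finset.sum_add_distrib]
    exact Finset.sum_congr rfl fun i _ => by rw [hfrobadd, mul_add]
  have hright_smul : ∀ (c : F) (x y : (Unit ⊕ Fin n) ⊕ (Unit ⊕ Fin n) → F),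
      hermInner q x (c • y) = c ^ q * hermInner q x y := by
    intro c x y
    simp only [hermInner, Pi.smul_apply, smul_eq_mul]
    rw [Finset.mul_sum]
    exact Finset.sum_congr rfl fun i _ => by rw [mul_pow]; ring
  -- self-orthogonality
  have horth : ∀ x ∈ rowSpan G, ∀ y ∈ rowSpan G, hermInner q x y = 0 := by
    intro x hx y hy
    have hrows : ∀ i, hermInner q (G i) y = 0 := by
      intro i
      refine Submodule.span_induction (p := fun y _ => hermInner q (G i) y = 0) ?_ ?_ ?_ ?_ hy
      · rintro _ ⟨j, rfl⟩; exact hkey i j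
      · simp [hermInner, zero_pow hq0]
      · intro u v _ _ hu hv; rw [hright_add, hu, hv, add_zero]
      · intro c u _ hu; rw [hright_smul, hu, mul_zero]
    exact hermInner_span_left G y hrows x hx
  have hsub : (rowSpan G : Set ((Unit ⊕ Fin n) ⊕ (Unit ⊕ Fin n) → F))
      ⊆ hermDual q (rowSpan G : Set ((Unit ⊕ Fin n) ⊕ (Unit ⊕ Fin n) → F)) := by
    intro y hy x hx
    exact horth x hx y hy
  -- linear independence of the last n rows
  have hLunit : IsUnit L := (Matrix.isUnit_iff_isUnit_det L).mpr (Matrix.isUnit_det_of_right_inverse hL)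
  have hLrows : LinearIndependent F (fun i : Fin n => L i) :=
    Matrix.linearIndependent_rows_iff_isUnit.mpr hLunit
  have haL : LinearIndependent F (fun i : Fin n => a • L i) := by
    have := hLrows.units_smul (fun _ : Fin n => Units.mk0 a ha0)
    convert this using 1
    funext i
    simp [Units.smul_def]
  set π : (((Unit ⊕ Fin n) ⊕ (Unit ⊕ Fin n)) → F) →ₗ[F] (Fin n → F) :=
    LinearMap.funLeft F F (fun j : Fin n => Sum.inr (Sum.inr j)) with hπdef
  have hπG : ∀ i : Fin n, π (G i.succ) = a • L i := by
    intro i; funext j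
    simp [hπdef, LinearMap.funLeft_apply, hG8 i j]
  have hsuccLI : LinearIndependent F (fun i : Fin n => G i.succ) := by
    apply LinearIndependent.of_comp π
    have : (⇑π ∘ fun i : Fin n => G i.succ) = fun i : Fin n => a • L i := funext hπG
    rw [this]
    exact haL
  -- dimension at least n
  have hgen : n ≤ Module.finrank F (rowSpan G) := by
    have hle : Submodule.span F (Set.range fun i : Fin n => G i.succ) ≤ rowSpan G := by
      apply Submodule.span_mono
      rintro _ ⟨i, rfl⟩
      exact ⟨i.succ, rfl⟩
    have heq : Module.finrank F (Submodule.span F (Set.range fun i : Fin n => G i.succ)) = n := by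
      rw [finrank_span_eq_card hsuccLI, Fintype.card_fin]
    calc n = _ := heq.symm
      _ ≤ Module.finrank F (rowSpan G) := Submodule.finrank_mono hle
  refine ⟨⟨hsub, hgen⟩, ?_⟩
  -- the self-dual case
  intro hδ hθ
  have hLI : LinearIndependent F (fun i : Fin (n+1) => G i) := by
    rw [Fintype.linearIndependent_iff]
    intro c hc
    have h0 : c 0 = 0 := by
      have h := congrFun hc (Sum.inl (Sum.inl ()))
      simp only [Finset.sum_apply, Pi.smul_apply, smul_eq_mul, Pi.zero_apply] at h
      rw [Fin.sum_univ_succ] at h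
      simp only [hG1, hG5, hδ, mul_zero, Finset.sum_const_zero, add_zero] at h
      exact (mul_eq_zero.mp h).resolve_right hθ
    have hrest : ∀ i : Fin n, c i.succ = 0 := by
      have hsum : ∑ i : Fin n, c i.succ • G i.succ = 0 := by
        have h := hc
        rw [Fin.sum_univ_succ, h0, zero_smul, zero_add] at h
        exact h
      exact Fintype.linearIndependent_iff.mp hsuccLI (fun i => c i.succ) hsum
    intro i
    induction i using Fin.cases with
    | zero => exact h0
    | succ i => exact hrest i
  have hrank : Module.finrank F (rowSpan G) = n + 1 := by
    rw [rowSpan, finrank_span_eq_card hLI, Fintype.card_fin]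
  refine ⟨?_, hrank⟩
  -- rank of G and dimension of the kernel of mulVecLin G
  have hrankG : G.rank = n + 1 := by
    rw [Matrix.rank_eq_finrank_span_row]
    exact hrank
  have hcardι : Fintype.card ((Unit ⊕ Fin n) ⊕ (Unit ⊕ Fin n)) = 2 * n + 2 := by
    simp
    omega
  have hker : Module.finrank F (LinearMap.ker G.mulVecLin) = n + 1 := by
    have h := LinearMap.finrank_range_add_finrank_ker (G.mulVecLin)
    rw [Module.finrank_fintype_fun_eq_card, hcardι] at h
    have hr : Module.finrank F (LinearMap.range G.mulVecLin) = n + 1 := hrankG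
    omega
  -- the Frobenius twist
  set Φ : (((Unit ⊕ Fin n) ⊕ (Unit ⊕ Fin n)) → F) → (((Unit ⊕ Fin n) ⊕ (Unit ⊕ Fin n)) → F) :=
    fun y j => y j ^ q with hΦdef
  have hΦinj : Function.Injective Φ := by
    intro y z h
    funext j
    have h1 := congrFun h j
    have h2 := congrArg (· ^ q) h1
    simpa [hΦdef, hqq] using h2
  have hΦsurj : Function.Surjective Φ :=
    Finite.surjective_of_injective hΦinj
  -- description of the Hermitian dual as a preimage of the kernel
  have hD : hermDual q (rowSpan G : Set (((Unit ⊕ Fin n) ⊕ (Unit ⊕ Fin n)) → F))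
      = Φ ⁻¹' ((LinearMap.ker G.mulVecLin : Submodule F (((Unit ⊕ Fin n) ⊕ (Unit ⊕ Fin n)) → F)) : Set (((Unit ⊕ Fin n) ⊕ (Unit ⊕ Fin n)) → F)) := by
    ext y
    have hmv : ∀ i : Fin (n+1), G.mulVecLin (Φ y) i = hermInner q (G i) y := by
      intro i
      simp [Matrix.mulVecLin_apply, Matrix.mulVec, dotProduct, hΦdef, hermInner]
    constructor
    · intro hy
      simp only [Set.mem_preimage, SetLike.mem_coe, LinearMap.mem_ker]
      funext i
      rw [hmv i, hy (G i) (Submodule.subset_span ⟨i, rfl⟩)]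
      rfl
    · intro hy x hx
      simp only [Set.mem_preimage, SetLike.mem_coe, LinearMap.mem_ker] at hy
      refine hermInner_span_left G y (fun i => ?_) x hx
      rw [← hmv i, hy]
      rfl
  -- cardinality comparison
  haveI : Fintype (rowSpan G) := Fintype.ofFinite _
  haveI : Fintype (LinearMap.ker G.mulVecLin) := Fintype.ofFinite _
  have hcardC : (rowSpan G : Set (((Unit ⊕ Fin n) ⊕ (Unit ⊕ Fin n)) → F)).ncard
      = Fintype.card F ^ (n + 1) := by
    rw [← Nat.card_coe_set_eq, SetLike.coe_sort_coe, Nat.card_eq_fintype_card,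
      Module.card_eq_pow_finrank (K := F), hrank]
  have hcardK : ((LinearMap.ker G.mulVecLin :
      Submodule F (((Unit ⊕ Fin n) ⊕ (Unit ⊕ Fin n)) → F)) :
      Set (((Unit ⊕ Fin n) ⊕ (Unit ⊕ Fin n)) → F)).ncard = Fintype.card F ^ (n + 1) := by
    rw [← Nat.card_coe_set_eq, SetLike.coe_sort_coe, Nat.card_eq_fintype_card,
      Module.card_eq_pow_finrank (K := F), hker]
  have hcardD : (hermDual q (rowSpan G : Set (((Unit ⊕ Fin n) ⊕ (Unit ⊕ Fin n)) → F))).ncard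
      = Fintype.card F ^ (n + 1) := by
    rw [hD]
    calc (Φ ⁻¹' _).ncard = (Φ '' (Φ ⁻¹' _)).ncard :=
          (Set.ncard_image_of_injective _ hΦinj).symm
      _ = _ := by rw [Set.image_preimage_eq _ hΦsurj]; exact hcardK
  exact Set.eq_of_subset_of_ncard_le hsub (by rw [hcardD, hcardC]) (Set.toFinite _)
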